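/- Let H₁₁ be a d×d complex matrix, H₂₁ a q×d complex matrix with H₁₂ = H₂₁ᴴ, and H₂₂ a q×q Hermitian complex matrix. Let χ ∈ ℝ be an eigenvalue of H₂₂ with unit eigenvector ψ (H₂₂ψ = χψ), and let φ ∈ ℂ^d be a unit vector such that ⟨ψ, H₂₁·φ⟩ ≠ 0. Define, for real λ with H₂₂ − λ·1 invertible, the Rayleigh quotient R(λ) = Re ⟨φ, (H₁₁ − H₂₁ᴴ·(H₂₂ − λ·1)⁻¹·H₂₁)·φ⟩ of the effective Hamiltonian at φ. Then R(λ) tends to −∞ as λ tends to χ from the left (along the filter 𝓝[<] χ); in particular the smallest eigenvalue of the effective Hamiltonian H_eff(λ) diverges to −∞ as λ → χ⁻. -/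

import Mathlib

open Matrix

/-- The Euclidean (ℓ²) norm of a complex vector. -/
noncomputable def enorm' {n : Type*} [Fintype n] (v : n → ℂ) : ℝ :=
  ‖(EuclideanSpace.equiv n ℂ).symm v‖

/-- The standard Hermitian inner product of two complex vectors. -/
noncomputable def einner {n : Type*} [Fintype n] (v w : n → ℂ) : ℂ :=
  inner ℂ ((EuclideanSpace.equiv n ℂ).symm v) ((EuclideanSpace.equiv n ℂ).symm w)

lemma einner_eq_dot {n : Type*} [Fintype n] (v w : n → ℂ) :
    einner v w = dotProduct (star v) w := by
  simp [einner, dotProduct, PiLp.inner_apply, mul_comm]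

/-- Auxiliary: invertibility of `H₂₂ - λ•1` when `λ` avoids the eigenvalues. -/
lemma aux_det (q : ℕ) (H₂₂ : Matrix (Fin q) (Fin q) ℂ) (hH₂₂ : H₂₂.IsHermitian) (lam : ℝ)
    (h : ∀ i, hH₂₂.eigenvalues i ≠ lam) : IsUnit (H₂₂ - (lam : ℂ) • 1).det := by
  have hU : (hH₂₂.eigenvectorUnitary : Matrix (Fin q) (Fin q) ℂ) * star (hH₂₂.eigenvectorUnitary : Matrix (Fin q) (Fin q) ℂ) = 1 :=
    Matrix.mem_unitaryGroup_iff.mp hH₂₂.eigenvectorUnitary.2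
  have hdecomp : H₂₂ - (lam : ℂ) • 1
      = (hH₂₂.eigenvectorUnitary : Matrix (Fin q) (Fin q) ℂ)
        * diagonal (fun i => (hH₂₂.eigenvalues i : ℂ) - lam)
        * star (hH₂₂.eigenvectorUnitary : Matrix (Fin q) (Fin q) ℂ) := by
    have h1 : diagonal (fun i : Fin q => (hH₂₂.eigenvalues i : ℂ) - lam)
        = diagonal (RCLike.ofReal ∘ hH₂₂.eigenvalues) - (lam : ℂ) • 1 := by
      rw [Matrix.smul_one_eq_diagonal, ← Matrix.diagonal_sub]
      rfl
    rw [h1, Matrix.mul_sub, Matrix.sub_mul, ← Unitary.conjStarAlgAut_apply (S := ℂ), ← hH₂₂.spectral_theorem]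
    congr 1
    rw [Matrix.mul_smul, Matrix.smul_mul, mul_one, hU]
  rw [hdecomp, det_mul, det_mul]
  have h2 : (hH₂₂.eigenvectorUnitary : Matrix (Fin q) (Fin q) ℂ).det
      * (star (hH₂₂.eigenvectorUnitary : Matrix (Fin q) (Fin q) ℂ)).det = 1 := by
    rw [← det_mul, hU, det_one]
  have h3 : (diagonal (fun i => (hH₂₂.eigenvalues i : ℂ) - lam)).det ≠ 0 := by
    rw [det_diagonal]
    refine Finset.prod_ne_zero_iff.mpr fun i _ => ?_
    rw [sub_ne_zero]
    exact_mod_cast fun hc => h i (by exact_mod_cast hc)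
  refine isUnit_iff_ne_zero.mpr ?_
  intro hc
  rw [mul_comm, ← mul_assoc] at hc
  rw [mul_comm ((star (hH₂₂.eigenvectorUnitary : Matrix (Fin q) (Fin q) ℂ)).det), h2, one_mul] at hc
  exact h3 hc

/-- Auxiliary: exact spectral formula for the Rayleigh quotient. -/
lemma aux_key (d q : ℕ)
    (H₁₁ : Matrix (Fin d) (Fin d) ℂ)
    (H₂₁ : Matrix (Fin q) (Fin d) ℂ)
    (H₂₂ : Matrix (Fin q) (Fin q) ℂ) (hH₂₂ : H₂₂.IsHermitian)
    (φ : Fin d → ℂ) (lam : ℝ)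
    (hne : ∀ i, hH₂₂.eigenvalues i ≠ lam) :
    (einner φ ((H₁₁ - H₂₁ᴴ * (H₂₂ - (lam : ℂ) • 1)⁻¹ * H₂₁) *ᵥ φ)).re
      = (einner φ (H₁₁ *ᵥ φ)).re
        - ∑ i, (hH₂₂.eigenvalues i - lam)⁻¹
            * ‖dotProduct (star (⇑(hH₂₂.eigenvectorBasis i))) (H₂₁ *ᵥ φ)‖ ^ 2 := by
  classical
  have hdet : IsUnit (H₂₂ - (lam : ℂ) • 1).det := aux_det q H₂₂ hH₂₂ lam hne
  set b := hH₂₂.eigenvectorBasis with hb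
  set dd := hH₂₂.eigenvalues with hdd
  set e : Fin q → (Fin q → ℂ) := fun i => ⇑(b i) with he
  set v : Fin q → ℂ := H₂₁ *ᵥ φ with hv
  set c : Fin q → ℂ := fun i => dotProduct (star (e i)) v with hc
  set A : Matrix (Fin q) (Fin q) ℂ := H₂₂ - (lam : ℂ) • 1 with hA
  have eig : ∀ i, H₂₂ *ᵥ e i = ((dd i : ℂ)) • e i := by
    intro i
    rw [he, hb]
    rw [hH₂₂.mulVec_eigenvectorBasis i]
    funext j
    simp [Complex.real_smul, hdd]
  have repr : ∀ x : Fin q → ℂ, ∑ i, (dotProduct (star (e i)) x) • e i = x := fun x => by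
    have := congrArg (EuclideanSpace.equiv (Fin q) ℂ) (b.sum_repr' ((EuclideanSpace.equiv (Fin q) ℂ).symm x))
    simp only [map_sum, map_smul, ContinuousLinearEquiv.apply_symm_apply] at this
    rw [he]
    simp only [← einner_eq_dot, einner] at this ⊢
    exact this
  have hzero : ∀ i, ((dd i : ℂ)) - lam ≠ 0 := by
    intro i h0
    exact hne i (by exact_mod_cast sub_eq_zero.mp h0)
  have hAe : ∀ i, A *ᵥ e i = ((dd i : ℂ) - lam) • e i := by
    intro i
    rw [hA, Matrix.sub_mulVec, eig, Matrix.smul_mulVec, Matrix.one_mulVec, sub_smul]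
  set w : Fin q → ℂ := ∑ i, (((dd i : ℂ) - lam)⁻¹ * c i) • e i with hw
  have hAw : A *ᵥ w = v := by
    have : A *ᵥ w = ∑ i, (((dd i : ℂ) - lam)⁻¹ * c i) • (A *ᵥ e i) := by
      rw [hw, show ∀ x, A *ᵥ x = A.mulVecLin x from fun _ => rfl, map_sum]
      simp [Matrix.mulVecLin_apply, Matrix.mulVec_smul]
    rw [this]
    have : ∀ i, (((dd i : ℂ) - lam)⁻¹ * c i) • (A *ᵥ e i) = c i • e i := by
      intro i
      rw [hAe i, smul_smul]
      congr 1
      field_simp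
      exact mul_div_cancel_left₀ _ (hzero i)
    simp_rw [this]
    exact repr v
  have hinv : A⁻¹ *ᵥ v = w := by
    rw [← hAw, Matrix.mulVec_mulVec, Matrix.nonsing_inv_mul _ hdet, Matrix.one_mulVec]
  have hsplit : einner φ ((H₁₁ - H₂₁ᴴ * A⁻¹ * H₂₁) *ᵥ φ)
      = einner φ (H₁₁ *ᵥ φ) - dotProduct (star v) w := by
    rw [show einner φ ((H₁₁ - H₂₁ᴴ * A⁻¹ * H₂₁) *ᵥ φ) = dotProduct (star φ) ((H₁₁ - H₂₁ᴴ * A⁻¹ * H₂₁) *ᵥ φ) from einner_eq_dot _ _]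
    rw [Matrix.sub_mulVec, dotProduct_sub]
    congr 1
    · exact (einner_eq_dot _ _).symm
    rw [← Matrix.mulVec_mulVec, ← Matrix.mulVec_mulVec, hv] at *
    rw [hinv]
    rw [Matrix.dotProduct_mulVec (star φ) H₂₁ᴴ w, ← Matrix.star_mulVec]
  have dot_sum : ∀ (u : Fin q → ℂ) (f : Fin q → (Fin q → ℂ)),
      dotProduct u (∑ i, f i) = ∑ i, dotProduct u (f i) := by
    intro u f
    simp only [dotProduct, Finset.sum_apply, Finset.mul_sum]
    rw [Finset.sum_comm]
  have hdot : dotProduct (star v) w = ∑ i, (((dd i : ℂ) - lam)⁻¹ * c i) * (starRingEnd ℂ) (c i) := by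
    rw [hw, dot_sum]
    refine Finset.sum_congr rfl fun i _ => ?_
    have hvei : dotProduct (star v) (e i) = (starRingEnd ℂ) (c i) := by
      rw [hc, Matrix.star_dotProduct]
      rfl
    rw [dotProduct_smul, hvei]
    rfl
  have hre : (dotProduct (star v) w).re = ∑ i, (dd i - lam)⁻¹ * ‖c i‖ ^ 2 := by
    rw [hdot, Complex.re_sum]
    refine Finset.sum_congr rfl fun i _ => ?_
    have h1 : ((dd i : ℂ) - lam)⁻¹ = (((dd i - lam)⁻¹ : ℝ) : ℂ) := by push_cast; ring
    have h2 : c i * (starRingEnd ℂ) (c i) = ((‖c i‖ ^ 2 : ℝ) : ℂ) := by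
      rw [Complex.mul_conj, Complex.normSq_eq_norm_sq]
    rw [mul_assoc, h1, h2, ← Complex.ofReal_mul, Complex.ofReal_re]
  rw [hsplit, Complex.sub_re, hre]

/-- **Divergence of the effective-Hamiltonian Rayleigh quotient at a pole.**
Let `H₂₂` be Hermitian with eigenvalue `χ` and unit eigenvector `ψ`, and let `φ` be a unit
vector with `⟨ψ, H₂₁ φ⟩ ≠ 0`. Then the Rayleigh quotient
`R(λ) = Re ⟨φ, (H₁₁ - H₂₁ᴴ (H₂₂ - λ•1)⁻¹ H₂₁) φ⟩` of the effective Hamiltonian tends to `-∞`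
as `λ → χ⁻` (along `𝓝[<] χ`); in particular the smallest eigenvalue of `H_eff(λ)` diverges
to `-∞` as `λ → χ⁻`. -/
theorem rayleigh_quotient_tendsto_atBot
    (d q : ℕ)
    (H₁₁ : Matrix (Fin d) (Fin d) ℂ)
    (H₂₁ : Matrix (Fin q) (Fin d) ℂ)
    (H₂₂ : Matrix (Fin q) (Fin q) ℂ) (hH₂₂ : H₂₂.IsHermitian)
    (χ : ℝ) (ψ : Fin q → ℂ) (hψnorm : enorm' ψ = 1)
    (hψ : H₂₂ *ᵥ ψ = (χ : ℂ) • ψ)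
    (φ : Fin d → ℂ) (hφ : enorm' φ = 1)
    (hoverlap : einner ψ (H₂₁ *ᵥ φ) ≠ 0) :
    Filter.Tendsto
      (fun lam : ℝ =>
        (einner φ ((H₁₁ - H₂₁ᴴ * (H₂₂ - (lam : ℂ) • 1)⁻¹ * H₂₁) *ᵥ φ)).re)
      (nhdsWithin χ (Set.Iio χ)) Filter.atBot := by
  classical
  set b := hH₂₂.eigenvectorBasis with hb
  set dd := hH₂₂.eigenvalues with hdd
  set e : Fin q → (Fin q → ℂ) := fun i => ⇑(b i) with he
  set v : Fin q → ℂ := H₂₁ *ᵥ φ with hv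
  set c : Fin q → ℂ := fun i => dotProduct (star (e i)) v with hc
  set p : Fin q → ℂ := fun i => dotProduct (star (e i)) ψ with hp
  have repr : ∀ x : Fin q → ℂ, ∑ i, (dotProduct (star (e i)) x) • e i = x := fun x => by
    have := congrArg (EuclideanSpace.equiv (Fin q) ℂ) (b.sum_repr' ((EuclideanSpace.equiv (Fin q) ℂ).symm x))
    simp only [map_sum, map_smul, ContinuousLinearEquiv.apply_symm_apply] at this
    rw [he]
    simp only [← einner_eq_dot, einner] at this ⊢
    exact this
  have sum_dot : ∀ (f : Fin q → (Fin q → ℂ)) (y : Fin q → ℂ),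
      dotProduct (∑ i, f i) y = ∑ i, dotProduct (f i) y := by
    intro f y
    simp only [dotProduct, Finset.sum_apply, Finset.sum_mul]
    rw [Finset.sum_comm]
  have expand : ∀ x y : Fin q → ℂ, dotProduct (star x) y
      = ∑ i, (starRingEnd ℂ) (dotProduct (star (e i)) x) * dotProduct (star (e i)) y := by
    intro x y
    conv_lhs => rw [← repr x]
    rw [star_sum, sum_dot]
    refine Finset.sum_congr rfl fun i _ => ?_
    rw [star_smul, smul_dotProduct]
    rfl
  -- Parseval-type bound for ψ
  have hψ2 : (dotProduct (star ψ) ψ) = ((1 : ℝ) : ℂ) := by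
    rw [← einner_eq_dot]
    show (inner ℂ ((EuclideanSpace.equiv (Fin q) ℂ).symm ψ) ((EuclideanSpace.equiv (Fin q) ℂ).symm ψ) : ℂ) = _
    rw [inner_self_eq_norm_sq_to_K]
    have : ‖(EuclideanSpace.equiv (Fin q) ℂ).symm ψ‖ = 1 := hψnorm
    rw [this]
    norm_num
  have conj_mul_re : ∀ z : ℂ, ((starRingEnd ℂ) z * z).re = ‖z‖ ^ 2 := by
    intro z
    rw [mul_comm, Complex.mul_conj, Complex.normSq_eq_norm_sq,
      Complex.ofReal_re]
  have hpar : ∑ i, ‖p i‖ ^ 2 = 1 := by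
    have h0 := expand ψ ψ
    have h1 := congrArg Complex.re h0
    rw [hψ2, Complex.ofReal_re, Complex.re_sum] at h1
    rw [h1]
    exact Finset.sum_congr rfl fun i _ => (conj_mul_re (p i)).symm
  -- vanishing of off-χ components of ψ
  have pvan : ∀ i, dd i ≠ χ → p i = 0 := by
    intro i hi
    have h1 : dotProduct (star (e i)) (H₂₂ *ᵥ ψ) = (dd i : ℂ) * p i := by
      rw [Matrix.dotProduct_mulVec]
      have h2 : star (e i) ᵥ* H₂₂ = (dd i : ℂ) • star (e i) := by
        have h3 : star (H₂₂ *ᵥ e i) = star (e i) ᵥ* H₂₂ := by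
          rw [Matrix.star_mulVec, hH₂₂.eq]
        rw [← h3]
        have h4 : H₂₂ *ᵥ e i = ((dd i : ℂ)) • e i := by
          rw [he, hb, hH₂₂.mulVec_eigenvectorBasis i]
          funext j
          simp [Complex.real_smul, hdd]
        rw [h4, star_smul]
        simp [Complex.conj_ofReal]
      rw [h2, smul_dotProduct]
      rfl
    have h5 : dotProduct (star (e i)) (H₂₂ *ᵥ ψ) = (χ : ℂ) * p i := by
      rw [hψ, dotProduct_smul]
      rfl
    have h6 : ((dd i : ℂ) - χ) * p i = 0 := by
      rw [sub_mul, ← h1, h5, sub_self]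
    rcases mul_eq_zero.mp h6 with h7 | h7
    · exact absurd (by exact_mod_cast sub_eq_zero.mp h7) hi
    · exact h7
  -- the overlap constant
  set K : ℝ := ‖dotProduct (star ψ) v‖ ^ 2 with hK
  have hKpos : 0 < K := by
    rw [hK]
    exact pow_pos (norm_pos_iff.mpr (by rwa [einner_eq_dot] at hoverlap)) 2
  set S : Finset (Fin q) := Finset.univ.filter (fun i => dd i = χ) with hS
  have overlapS : dotProduct (star ψ) v = ∑ i ∈ S, (starRingEnd ℂ) (p i) * c i := by
    rw [expand ψ v]
    symm
    apply Finset.sum_subset (Finset.subset_univ _)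
    intro i _ hiS
    have : dd i ≠ χ := by simpa [hS] using hiS
    rw [pvan i this]
    simp

  have hKle : K ≤ ∑ i ∈ S, ‖c i‖ ^ 2 := by
    have h1 : ‖dotProduct (star ψ) v‖ ≤ ∑ i ∈ S, ‖p i‖ * ‖c i‖ := by
      rw [overlapS]
      refine (norm_sum_le _ _).trans (Finset.sum_le_sum fun i _ => ?_)
      rw [norm_mul, RCLike.norm_conj]
    have h2 : (∑ i ∈ S, ‖p i‖ * ‖c i‖) ^ 2 ≤ (∑ i ∈ S, ‖p i‖ ^ 2) * (∑ i ∈ S, ‖c i‖ ^ 2) :=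
      Finset.sum_mul_sq_le_sq_mul_sq S _ _
    have h3 : ∑ i ∈ S, ‖p i‖ ^ 2 ≤ 1 := by
      rw [← hpar]
      exact Finset.sum_le_sum_of_subset_of_nonneg (Finset.subset_univ _)
        (fun i _ _ => by positivity)
    have h4 : 0 ≤ ∑ i ∈ S, ‖c i‖ ^ 2 := Finset.sum_nonneg fun i _ => by positivity
    have h5 : K ≤ (∑ i ∈ S, ‖p i‖ * ‖c i‖) ^ 2 := by
      rw [hK]
      exact pow_le_pow_left₀ (norm_nonneg _) h1 2
    nlinarith
  -- choice of δ
  obtain ⟨δ, hδpos, hδ⟩ : ∃ δ : ℝ, 0 < δ ∧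
      ∀ i, dd i ≠ χ → ∀ lam : ℝ, χ - δ < lam → lam < χ → δ ≤ |dd i - lam| := by
    by_cases hT : (Finset.univ.filter (fun i => dd i ≠ χ)).Nonempty
    · set T := Finset.univ.filter (fun i => dd i ≠ χ) with hTdef
      set ε := T.inf' hT (fun i => |dd i - χ|) with hε
      have hεpos : 0 < ε := by
        rw [hε]
        rw [Finset.lt_inf'_iff]
        intro i hi
        have : dd i ≠ χ := by simpa [hTdef] using hi
        exact abs_pos.mpr (sub_ne_zero.mpr this)
      refine ⟨ε / 2, by positivity, fun i hi lam h1 h2 => ?_⟩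
      have hεi : ε ≤ |dd i - χ| := Finset.inf'_le _ (by simp [hTdef, hi])
      have htri : |dd i - χ| ≤ |dd i - lam| + |lam - χ| := by
        have := abs_sub_abs_le_abs_sub (dd i - χ) (dd i - lam)
        calc |dd i - χ| = |(dd i - lam) + (lam - χ)| := by ring_nf
          _ ≤ |dd i - lam| + |lam - χ| := abs_add_le _ _
      have habs : |lam - χ| = χ - lam := by
        rw [abs_of_neg (by linarith)]
        ring
      linarith
    · have hall : ∀ i, dd i = χ := by
        intro i
        by_contra hne
        exact hT ⟨i, Finset.mem_filter.mpr ⟨Finset.mem_univ i, hne⟩⟩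
      exact ⟨1, one_pos, fun i hi _ _ _ => absurd (hall i) hi⟩
  set t0 : ℝ := (einner φ (H₁₁ *ᵥ φ)).re with ht0
  set C : ℝ := δ⁻¹ * ∑ i, ‖c i‖ ^ 2 with hC
  -- the eventual bound
  have hbound : ∀ lam : ℝ, χ - δ < lam → lam < χ →
      (einner φ ((H₁₁ - H₂₁ᴴ * (H₂₂ - (lam : ℂ) • 1)⁻¹ * H₂₁) *ᵥ φ)).re
        ≤ t0 + C - K * (χ - lam)⁻¹ := by
    intro lam h1 h2
    have hne : ∀ i, dd i ≠ lam := by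
      intro i
      by_cases hiχ : dd i = χ
      · rw [hiχ]; exact ne_of_gt h2
      · intro hcon
        have := hδ i hiχ lam h1 h2
        rw [hcon] at this
        simp at this
        linarith
    rw [aux_key d q H₁₁ H₂₁ H₂₂ hH₂₂ φ lam hne]
    have hsum : ∑ i, (dd i - lam)⁻¹ * ‖c i‖ ^ 2
        = (∑ i ∈ S, (dd i - lam)⁻¹ * ‖c i‖ ^ 2)
          + ∑ i ∈ Finset.univ.filter (fun i => ¬ dd i = χ), (dd i - lam)⁻¹ * ‖c i‖ ^ 2 := by
      rw [hS]
      exact (Finset.sum_filter_add_sum_filter_not Finset.univ _ _).symm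
    have hSsum : K * (χ - lam)⁻¹ ≤ ∑ i ∈ S, (dd i - lam)⁻¹ * ‖c i‖ ^ 2 := by
      have : ∀ i ∈ S, (dd i - lam)⁻¹ * ‖c i‖ ^ 2 = (χ - lam)⁻¹ * ‖c i‖ ^ 2 := by
        intro i hi
        have : dd i = χ := by simpa [hS] using hi
        rw [this]
      rw [Finset.sum_congr rfl this, ← Finset.mul_sum, mul_comm K]
      have hinv : (0:ℝ) < (χ - lam)⁻¹ := by
        apply inv_pos.mpr; linarith
      exact mul_le_mul_of_nonneg_left hKle (le_of_lt hinv)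
    have hTsum : -C ≤ ∑ i ∈ Finset.univ.filter (fun i => ¬ dd i = χ), (dd i - lam)⁻¹ * ‖c i‖ ^ 2 := by
      have hterm : ∀ i ∈ Finset.univ.filter (fun i => ¬ dd i = χ),
          -(δ⁻¹ * ‖c i‖ ^ 2) ≤ (dd i - lam)⁻¹ * ‖c i‖ ^ 2 := by
        intro i hi
        have hiχ : dd i ≠ χ := by simpa using hi
        have hd := hδ i hiχ lam h1 h2
        have habs : |(dd i - lam)⁻¹| ≤ δ⁻¹ := by
          rw [abs_inv]
          exact inv_anti₀ hδpos hd
        have : -(δ⁻¹) ≤ (dd i - lam)⁻¹ := by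
          have := neg_abs_le ((dd i - lam)⁻¹)
          linarith
        have hc2 : (0:ℝ) ≤ ‖c i‖ ^ 2 := by positivity
        nlinarith
      calc -C = ∑ i ∈ Finset.univ.filter (fun i => ¬ dd i = χ), -(δ⁻¹ * ‖c i‖ ^ 2)
            - (∑ i ∈ Finset.univ.filter (fun i => ¬ dd i = χ), -(δ⁻¹ * ‖c i‖ ^ 2) + C) := by ring
        _ ≤ ∑ i ∈ Finset.univ.filter (fun i => ¬ dd i = χ), (dd i - lam)⁻¹ * ‖c i‖ ^ 2 := by
            have hrest : 0 ≤ ∑ i ∈ Finset.univ.filter (fun i => ¬ dd i = χ), -(δ⁻¹ * ‖c i‖ ^ 2) + C := by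
              rw [hC, Finset.sum_neg_distrib, ← Finset.mul_sum]
              have hmono : ∑ i ∈ Finset.univ.filter (fun i => ¬ dd i = χ), ‖c i‖ ^ 2
                  ≤ ∑ i, ‖c i‖ ^ 2 :=
                Finset.sum_le_sum_of_subset_of_nonneg (Finset.subset_univ _)
                  (fun i _ _ => by positivity)
              have hδinv : (0:ℝ) ≤ δ⁻¹ := by positivity
              nlinarith
            have := Finset.sum_le_sum hterm
            linarith
    linarith [hsum, hSsum, hTsum]
  -- the comparison function tends to -∞
  have hg : Filter.Tendsto (fun lam : ℝ => t0 + C - K * (χ - lam)⁻¹)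
      (nhdsWithin χ (Set.Iio χ)) Filter.atBot := by
    have h1 : Filter.Tendsto (fun lam : ℝ => χ - lam) (nhdsWithin χ (Set.Iio χ))
        (nhdsWithin 0 (Set.Ioi 0)) := by
      apply tendsto_nhdsWithin_of_tendsto_nhds_of_eventually_within
      · have : Filter.Tendsto (fun lam : ℝ => χ - lam) (nhds χ) (nhds (χ - χ)) :=
          (continuous_const.sub continuous_id).tendsto χ
        rw [sub_self] at this
        exact this.mono_left nhdsWithin_le_nhds
      · filter_upwards [eventually_mem_nhdsWithin] with lam hlam
        simp only [Set.mem_Iio] at hlam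
        simp only [Set.mem_Ioi]
        linarith
    have h2 : Filter.Tendsto (fun lam : ℝ => (χ - lam)⁻¹) (nhdsWithin χ (Set.Iio χ))
        Filter.atTop := tendsto_inv_nhdsGT_zero.comp h1
    have h3 : Filter.Tendsto (fun lam : ℝ => K * (χ - lam)⁻¹) (nhdsWithin χ (Set.Iio χ))
        Filter.atTop := h2.const_mul_atTop hKpos
    have h4 : Filter.Tendsto (fun lam : ℝ => -(K * (χ - lam)⁻¹)) (nhdsWithin χ (Set.Iio χ))
        Filter.atBot := Filter.tendsto_neg_atTop_atBot.comp h3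
    have h5 := Filter.tendsto_atBot_add_const_left (nhdsWithin χ (Set.Iio χ)) (t0 + C) h4
    refine h5.congr fun lam => ?_
    ring
  refine Filter.tendsto_atBot_mono' _ ?_ hg
  have hmem : Set.Ioo (χ - δ) χ ∈ nhdsWithin χ (Set.Iio χ) :=
    Ioo_mem_nhdsLT_of_mem ⟨by linarith, le_refl χ⟩
  filter_upwards [hmem] with lam hlam
  exact hbound lam hlam.1 hlam.2
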